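/- Let λ > 1, q ∈ ℕ with q ≥ 1, s > 0, and for i ∈ ℕ₀ put E_i = {(x,y) ∈ ℝ² : λ^{2iq}x² + λ^{−2iq}y² ≤ s²}. Then for every κ ≥ 1, Leb₂(∩_{i=0}^{κ} E_i) ≤ 4·λ^{−κq}·s². Consequently, for any sequence s_n → 0, lim_{n→∞} Σ_{κ≥1} Leb₂(∩_{i=0}^{κ} E_i(s_n)) = 0, since the sum is at most (4/(1−λ^{−q}))·s_n². -/

import Mathlib

open MeasureTheory Filter Topology Set

noncomputable section

/-- The ellipse region `E_i = {(x,y) : λ^{2iq}x² + λ^{-2iq}y² ≤ s²}`. -/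
def ellipseSet (lam s : ℝ) (q i : ℕ) : Set (ℝ × ℝ) :=
  {p | lam ^ (2 * i * q) * p.1 ^ 2 + (lam ^ (2 * i * q))⁻¹ * p.2 ^ 2 ≤ s ^ 2}

/-- `U^{(κ)} = ⋂_{i=0}^{κ} E_i`. -/
def Uset (lam s : ℝ) (q κ : ℕ) : Set (ℝ × ℝ) :=
  ⋂ i ≤ κ, ellipseSet lam s q i

lemma Uset_vol_le (lam : ℝ) (hlam : 1 < lam) (q : ℕ) (s : ℝ) (κ : ℕ) :
    volume (Uset lam s q κ) ≤ ENNReal.ofReal (4 * (lam ^ (κ * q))⁻¹ * s ^ 2) := by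
  have hlam0 : (0:ℝ) < lam := lt_trans one_pos hlam
  have hpow : (0:ℝ) < lam ^ (κ * q) := pow_pos hlam0 _
  set a : ℝ := (lam ^ (κ * q))⁻¹ * |s| with ha
  have ha0 : 0 ≤ a := mul_nonneg (inv_nonneg.2 hpow.le) (abs_nonneg s)
  have hsub : Uset lam s q κ ⊆ Icc (-a) a ×ˢ Icc (-|s|) |s| := by
    intro p hp
    have h0 : p ∈ ellipseSet lam s q 0 := mem_iInter₂.1 hp 0 (Nat.zero_le κ)
    have hk : p ∈ ellipseSet lam s q κ := mem_iInter₂.1 hp κ le_rfl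
    simp only [ellipseSet, mem_setOf_eq] at h0 hk
    norm_num at h0
    have h2q : lam ^ (2 * κ * q) = (lam ^ (κ * q)) ^ 2 := by
      rw [show 2 * κ * q = κ * q * 2 by ring, pow_mul]
    rw [h2q] at hk
    have hx2 : p.1 ^ 2 ≤ a ^ 2 := by
      have hinvnn : 0 ≤ ((lam ^ (κ * q)) ^ 2)⁻¹ * p.2 ^ 2 := by positivity
      have hs2 : s ^ 2 = |s| ^ 2 := (sq_abs s).symm
      have h1 : (lam ^ (κ * q)) ^ 2 * p.1 ^ 2 ≤ |s| ^ 2 := by nlinarith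
      have : p.1 ^ 2 ≤ ((lam ^ (κ * q))⁻¹ * |s|) ^ 2 := by
        rw [mul_pow, inv_pow]
        rw [le_inv_mul_iff₀ (by positivity)] at *
        linarith [h1]
      simpa [ha] using this
    have hy2 : p.2 ^ 2 ≤ |s| ^ 2 := by
      rw [sq_abs]; nlinarith [sq_nonneg p.1]
    have hx := abs_le_of_sq_le_sq' hx2 ha0
    have hy := abs_le_of_sq_le_sq' hy2 (abs_nonneg s)
    exact ⟨⟨hx.1, hx.2⟩, ⟨hy.1, hy.2⟩⟩
  calc volume (Uset lam s q κ) ≤ volume (Icc (-a) a ×ˢ Icc (-|s|) |s|) :=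
        measure_mono hsub
    _ = ENNReal.ofReal (a - -a) * ENNReal.ofReal (|s| - -(|s|)) := by
        rw [Measure.volume_eq_prod, Measure.prod_prod, Real.volume_Icc, Real.volume_Icc]
    _ = ENNReal.ofReal ((a - -a) * (|s| - -(|s|))) :=
        (ENNReal.ofReal_mul (by linarith)).symm
    _ = ENNReal.ofReal (4 * (lam ^ (κ * q))⁻¹ * s ^ 2) := by
        congr 1
        have habs : |s| * |s| = s ^ 2 := by rw [← sq_abs]; ring
        rw [ha, ← habs]; ring

theorem measure_Uset_le_and_tsum_tendsto_zero
    (lam : ℝ) (hlam : 1 < lam) (q : ℕ) (hq : 1 ≤ q) :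
    (∀ s : ℝ, 0 < s → ∀ κ : ℕ, 1 ≤ κ →
      volume (Uset lam s q κ) ≤ ENNReal.ofReal (4 * (lam ^ (κ * q))⁻¹ * s ^ 2)) ∧
    ∀ s : ℕ → ℝ, Tendsto s atTop (𝓝 0) →
      (∀ n : ℕ, ∑' κ : ℕ, volume (Uset lam (s n) q (κ + 1)) ≤
        ENNReal.ofReal (4 / (1 - (lam ^ q)⁻¹) * (s n) ^ 2)) ∧
      Tendsto (fun n : ℕ => ∑' κ : ℕ, volume (Uset lam (s n) q (κ + 1))) atTop
        (𝓝 0) := by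
  have hlam0 : (0:ℝ) < lam := lt_trans one_pos hlam
  have hlq : (1:ℝ) < lam ^ q := one_lt_pow₀ hlam (by omega)
  obtain ⟨r, hr⟩ : ∃ r : ℝ, (lam ^ q)⁻¹ = r := ⟨_, rfl⟩
  rw [hr]
  have hr0 : 0 ≤ r := hr ▸ inv_nonneg.2 (by positivity)
  have hr1 : r < 1 := hr ▸ inv_lt_one_of_one_lt₀ hlq
  have key : ∀ x : ℝ, ∑' κ : ℕ, volume (Uset lam x q (κ + 1)) ≤
      ENNReal.ofReal (4 / (1 - r) * x ^ 2) := by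
    intro x
    have hterm : ∀ κ : ℕ, volume (Uset lam x q (κ + 1)) ≤
        ENNReal.ofReal (4 * x ^ 2) * (ENNReal.ofReal r) ^ (κ + 1) := by
      intro κ
      refine (Uset_vol_le lam hlam q x (κ + 1)).trans (le_of_eq ?_)
      have hp : (lam ^ ((κ + 1) * q))⁻¹ = r ^ (κ + 1) := by
        rw [show (κ + 1) * q = q * (κ + 1) by ring, pow_mul, ← inv_pow, hr]
      rw [hp, show 4 * r ^ (κ + 1) * x ^ 2 = 4 * x ^ 2 * r ^ (κ + 1) by ring,
        ENNReal.ofReal_mul (by positivity), ENNReal.ofReal_pow hr0]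
    calc ∑' κ : ℕ, volume (Uset lam x q (κ + 1))
        ≤ ∑' κ : ℕ, ENNReal.ofReal (4 * x ^ 2) * (ENNReal.ofReal r) ^ (κ + 1) :=
          ENNReal.tsum_le_tsum hterm
      _ = ENNReal.ofReal (4 * x ^ 2) * ∑' κ : ℕ, (ENNReal.ofReal r) ^ (κ + 1) :=
          ENNReal.tsum_mul_left
      _ ≤ ENNReal.ofReal (4 * x ^ 2) * (1 - ENNReal.ofReal r)⁻¹ := by
          refine mul_le_mul_right ?_ _
          have hle1 : ENNReal.ofReal r ≤ 1 := ENNReal.ofReal_le_one.2 hr1.le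
          calc ∑' κ : ℕ, (ENNReal.ofReal r) ^ (κ + 1)
              = ∑' κ : ℕ, (ENNReal.ofReal r) ^ κ * ENNReal.ofReal r := by
                simp [pow_succ]
            _ = (1 - ENNReal.ofReal r)⁻¹ * ENNReal.ofReal r := by
                rw [ENNReal.tsum_mul_right, ENNReal.tsum_geometric]
            _ ≤ (1 - ENNReal.ofReal r)⁻¹ * 1 := mul_le_mul_right hle1 _
            _ = (1 - ENNReal.ofReal r)⁻¹ := mul_one _
      _ = ENNReal.ofReal (4 / (1 - r) * x ^ 2) := by
          have h1 : ENNReal.ofReal ((1 - r)⁻¹) = (1 - ENNReal.ofReal r)⁻¹ := by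
            rw [ENNReal.ofReal_inv_of_pos (by linarith),
              ENNReal.ofReal_sub 1 hr0, ENNReal.ofReal_one]
          symm
          rw [show 4 / (1 - r) * x ^ 2 = 4 * x ^ 2 * (1 - r)⁻¹ by ring,
            ENNReal.ofReal_mul (by positivity), h1]
  refine ⟨fun s _ κ _ => Uset_vol_le lam hlam q s κ, fun s hs => ?_⟩
  refine ⟨fun n => key (s n), ?_⟩
  have hub : Tendsto (fun n => ENNReal.ofReal (4 / (1 - r) * (s n) ^ 2)) atTop (𝓝 0) := by
    have h1 : Tendsto (fun n => 4 / (1 - r) * (s n) ^ 2) atTop (𝓝 0) := by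
      have := (hs.pow 2).const_mul (4 / (1 - r))
      simpa using this
    have := (ENNReal.continuous_ofReal.tendsto 0).comp h1
    simpa [Function.comp_def] using this
  exact tendsto_of_tendsto_of_tendsto_of_le_of_le tendsto_const_nhds hub
    (fun n => zero_le) (fun n => key (s n))
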